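/- The solution of the delay equation A'(t) = q(A(t−h) − A(t)) with continuous initial data A₀ on [−h,0] satisfies min_{[−h,0]} A₀ ≤ A(t) ≤ max_{[−h,0]} A₀ for all t ≥ −h. -/

import Mathlib

open Set

lemma delay_upper (q h : ℝ) (hq : 0 < q) (hh : 0 < h)
    (A : ℝ → ℝ)
    (hcont : ContinuousOn A (Set.Ici (-h)))
    (hode : ∀ t ≥ (0 : ℝ), HasDerivAt A (q * (A (t - h) - A t)) t)
    (M : ℝ) (hM : ∀ s ∈ Set.Icc (-h) (0:ℝ), A s ≤ M) :
    ∀ t ≥ -h, A t ≤ M := by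
  have key : ∀ n : ℕ, ∀ t ∈ Set.Icc (-h) ((n : ℝ) * h), A t ≤ M := by
    intro n
    induction n with
    | zero => intro t ht; exact hM t (by simpa using ht)
    | succ n ih =>
      intro t ht
      obtain ⟨ht1, ht2⟩ := ht
      push_cast at ht2
      by_cases hcase : t ≤ (n : ℝ) * h
      · exact ih t ⟨ht1, hcase⟩
      push_neg at hcase
      have hnh0 : (0:ℝ) ≤ (n : ℝ) * h := by positivity
      -- g t = (A t - M) * exp (q * t) is antitone on [n h, (n+1) h]
      set g : ℝ → ℝ := fun s => (A s - M) * Real.exp (q * s) with hg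
      have hderiv : ∀ x ∈ Set.Ioo ((n:ℝ)*h) ((n:ℝ)*h + h), HasDerivAt g
          (q * (A (x - h) - M) * Real.exp (q * x)) x := by
        intro x hx
        have hx0 : (0:ℝ) ≤ x := le_of_lt (lt_of_le_of_lt hnh0 hx.1)
        have hA := hode x hx0
        have hexp : HasDerivAt (fun s => Real.exp (q * s)) (Real.exp (q * x) * q) x := by
          simpa using (HasDerivAt.exp ((hasDerivAt_id x).const_mul q))
        have := (hA.sub_const M).mul hexp
        exact this.congr_deriv (by ring)
      have hcontg : ContinuousOn g (Set.Icc ((n:ℝ)*h) ((n:ℝ)*h + h)) := by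
        have hsub : Set.Icc ((n:ℝ)*h) ((n:ℝ)*h + h) ⊆ Set.Ici (-h) := by
          intro x hx; exact le_trans (by linarith) hx.1
        exact ((hcont.mono hsub).sub continuousOn_const).mul
          (Continuous.continuousOn (by continuity))
      have hanti : AntitoneOn g (Set.Icc ((n:ℝ)*h) ((n:ℝ)*h + h)) := by
        apply antitoneOn_of_deriv_nonpos (convex_Icc _ _) hcontg
        · intro x hx
          rw [interior_Icc] at hx
          exact (hderiv x hx).differentiableAt.differentiableWithinAt
        · intro x hx
          rw [interior_Icc] at hx
          rw [(hderiv x hx).deriv]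
          have hAle : A (x - h) ≤ M := by
            apply ih
            constructor
            · nlinarith [hx.1]
            · nlinarith [hx.2]
          have hexp := Real.exp_pos (q * x)
          have h1 : q * (A (x - h) - M) ≤ 0 :=
            mul_nonpos_of_nonneg_of_nonpos hq.le (by linarith)
          exact mul_nonpos_of_nonpos_of_nonneg h1 hexp.le
      have hmem1 : (n:ℝ)*h ∈ Set.Icc ((n:ℝ)*h) ((n:ℝ)*h + h) := by
        constructor <;> linarith
      have hmem2 : t ∈ Set.Icc ((n:ℝ)*h) ((n:ℝ)*h + h) := by
        constructor <;> linarith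
      have hgle : g t ≤ g ((n:ℝ)*h) := hanti hmem1 hmem2 (le_of_lt hcase)
      have hgn : g ((n:ℝ)*h) ≤ 0 := by
        have : A ((n:ℝ)*h) ≤ M := ih _ ⟨by linarith, le_refl _⟩
        have := Real.exp_pos (q * ((n:ℝ)*h))
        simp only [hg]
        nlinarith
      have hgt : g t ≤ 0 := le_trans hgle hgn
      simp only [hg] at hgt
      nlinarith [Real.exp_pos (q * t), hgt]
  intro t ht
  obtain ⟨n, hn⟩ := exists_nat_ge (t / h)
  have : t ≤ (n:ℝ) * h := by
    rw [div_le_iff₀ hh] at hn; linarith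
  exact key n t ⟨ht, this⟩

theorem delay_eq_max_principle (q h : ℝ) (hq : 0 < q) (hh : 0 < h)
    (A : ℝ → ℝ)
    (hcont : ContinuousOn A (Set.Ici (-h)))
    (hode : ∀ t ≥ (0 : ℝ), HasDerivAt A (q * (A (t - h) - A t)) t) :
    ∀ t ≥ -h, sInf (A '' Set.Icc (-h) 0) ≤ A t ∧ A t ≤ sSup (A '' Set.Icc (-h) 0) := by
  have hsub : Set.Icc (-h) (0:ℝ) ⊆ Set.Ici (-h) := fun x hx => hx.1
  have hcomp : IsCompact (A '' Set.Icc (-h) (0:ℝ)) :=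
    isCompact_Icc.image_of_continuousOn (hcont.mono hsub)
  have hne : (A '' Set.Icc (-h) (0:ℝ)).Nonempty :=
    (Set.nonempty_Icc.mpr (by linarith)).image A
  have hbdda : BddAbove (A '' Set.Icc (-h) (0:ℝ)) := hcomp.bddAbove
  have hbddb : BddBelow (A '' Set.Icc (-h) (0:ℝ)) := hcomp.bddBelow
  intro t ht
  constructor
  · -- lower bound via -A
    have hupper := delay_upper q h hq hh (fun s => -A s)
      (hcont.neg)
      (fun s hs => by
        have := (hode s hs).neg
        exact this.congr_deriv (by ring))
      (-(sInf (A '' Set.Icc (-h) 0)))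
      (fun s hs => by
        have : sInf (A '' Set.Icc (-h) 0) ≤ A s := csInf_le hbddb ⟨s, hs, rfl⟩
        show -A s ≤ _
        linarith)
    have h2 : -A t ≤ -sInf (A '' Set.Icc (-h) 0) := hupper t ht
    linarith
  · exact delay_upper q h hq hh A hcont hode _
      (fun s hs => le_csSup hbdda ⟨s, hs, rfl⟩) t ht
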